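/- For every i ≥ 1, every word y with at least i occurrences of `false`, and every word x: ⟨a_{q,i+1} x | y⟩ = ⟨x | a_{q,i}† y⟩, where the left side is 0 if x has fewer than i+1 occurrences of `false`. That is, the *-adjoint of deleting the (i+1)-th anti-pawn is doubling the i-th anti-pawn. -/

import Mathlib

/-- A single pawn move: a pawn (`true`) advances one square rightward into an
empty square (`false`). -/
def PawnMove (w₀ w₁ : List Bool) : Prop :=
  ∃ u v : List Bool, w₀ = u ++ [true, false] ++ v ∧ w₁ = u ++ [false, true] ++ v

/-- Reachability: the reflexive-transitive closure of the single-move relation. -/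
def Reach : List Bool → List Bool → Prop :=
  Relation.ReflTransGen PawnMove

/-- The `ZMod 2` pairing `⟨w₀|w₁⟩`: `1` if `w₁` is reachable from `w₀`, else `0`. -/
noncomputable def pairing (w₀ w₁ : List Bool) : ZMod 2 :=
  open Classical in if Reach w₀ w₁ then 1 else 0

/-- Pairing extended to `Option`: any pairing in which one argument is `0`
(i.e. `none`) equals `0`. -/
noncomputable def pairingO : Option (List Bool) → Option (List Bool) → ZMod 2
  | some x, some y => pairing x y
  | none, _ => 0
  | _, none => 0

/-- `delOcc b i w` deletes the `i`-th occurrence (counted from the left,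
starting at `1`) of `b` in `w`; it is `none` (i.e. `0`) if `w` has fewer than
`i` occurrences of `b`. -/
def delOcc (b : Bool) : ℕ → List Bool → Option (List Bool)
  | _, [] => none
  | i, a :: w =>
    if a = b then
      if i = 1 then some w
      else Option.map (List.cons a) (delOcc b (i - 1) w)
    else Option.map (List.cons a) (delOcc b i w)

/-- `dblOcc b i w` doubles the `i`-th occurrence (counted from the left,
starting at `1`) of `b` in `w`, i.e. inserts an additional `b` immediately
before it; it is `none` (i.e. `0`) if `w` has fewer than `i` occurrences of
`b`. -/
def dblOcc (b : Bool) : ℕ → List Bool → Option (List Bool)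
  | _, [] => none
  | i, a :: w =>
    if a = b then
      if i = 1 then some (b :: a :: w)
      else Option.map (List.cons a) (dblOcc b (i - 1) w)
    else Option.map (List.cons a) (dblOcc b i w)

namespace PawnAdjointAux

/-- prefix count of `false`. -/
def gcnt (w : List Bool) (n : ℕ) : ℕ := (w.take n).count false

lemma gcnt_zero (w : List Bool) : gcnt w 0 = 0 := rfl

lemma gcnt_append (u w : List Bool) (n : ℕ) :
    gcnt (u ++ w) n = gcnt u n + gcnt w (n - u.length) := by
  simp [gcnt, List.take_append]

lemma gcnt_cons (a : Bool) (w : List Bool) (n : ℕ) :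
    gcnt (a :: w) (n + 1) = (if a = false then 1 else 0) + gcnt w n := by
  cases a <;> simp [gcnt] <;> omega

lemma gcnt_ge (w : List Bool) (n : ℕ) (h : w.length ≤ n) : gcnt w n = w.count false := by
  rw [gcnt, List.take_of_length_le h]

lemma gcnt_le_count (w : List Bool) (n : ℕ) : gcnt w n ≤ w.count false :=
  (List.take_sublist n w).count_le false

lemma gcnt_mono (w : List Bool) {n m : ℕ} (h : n ≤ m) : gcnt w n ≤ gcnt w m := by
  have h1 : w.take n = (w.take m).take n := by rw [List.take_take, Nat.min_eq_left h]
  rw [gcnt, h1]; exact (List.take_sublist _ _).count_le false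

lemma gcnt_split (u w : List Bool) (m : ℕ) :
    gcnt (u ++ w) (u.length + m) = u.count false + gcnt w m := by
  rw [gcnt_append, gcnt_ge u _ (Nat.le_add_right _ _), Nat.add_sub_cancel_left]

lemma gcnt_prefix (u w : List Bool) {n : ℕ} (h : n ≤ u.length) :
    gcnt (u ++ w) n = gcnt u n := by
  rw [gcnt_append, Nat.sub_eq_zero_of_le h, gcnt_zero, Nat.add_zero]

/-- Domination: the prefix-count characterization of reachability. -/
def Dom (w z : List Bool) : Prop :=
  w.length = z.length ∧ w.count false = z.count false ∧ ∀ n, gcnt w n ≤ gcnt z n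

lemma pawnMove_dom {w z : List Bool} (h : PawnMove w z) : Dom w z := by
  obtain ⟨u, v, rfl, rfl⟩ := h
  refine ⟨by simp, by simp, fun n => ?_⟩
  rw [List.append_assoc, List.append_assoc]
  rw [gcnt_append u ([true, false] ++ v) n, gcnt_append u ([false, true] ++ v) n,
      gcnt_append [true, false] v, gcnt_append [false, true] v]
  have key : gcnt [true, false] (n - u.length) ≤ gcnt [false, true] (n - u.length) := by
    match h : n - u.length with
    | 0 => simp [gcnt]
    | 1 => simp [gcnt]
    | (m+2) =>
      rw [gcnt_ge _ _ (by simp), gcnt_ge _ _ (by simp)]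
      simp
  simp only [List.length_cons, List.length_nil]
  exact Nat.add_le_add_left (Nat.add_le_add_right key _) _

lemma dom_refl (w : List Bool) : Dom w w := ⟨rfl, rfl, fun _ => le_rfl⟩

lemma reach_dom {w z : List Bool} (h : Reach w z) : Dom w z := by
  induction h with
  | refl => exact dom_refl w
  | tail _ hmove ih =>
    obtain ⟨d1, d2, d3⟩ := pawnMove_dom hmove
    exact ⟨ih.1.trans d1, ih.2.1.trans d2, fun n => (ih.2.2 n).trans (d3 n)⟩

lemma reach_cons (a : Bool) {w z : List Bool} (h : Reach w z) : Reach (a :: w) (a :: z) :=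
  Relation.ReflTransGen.lift (a :: ·)
    (fun _ _ ⟨u, v, e1, e2⟩ => ⟨a :: u, v, by simp [e1], by simp [e2]⟩) _ _ h

lemma reach_pull (k : ℕ) (r : List Bool) :
    Reach (List.replicate k true ++ false :: r) (false :: (List.replicate k true ++ r)) := by
  induction k with
  | zero =>
    simp only [List.replicate_zero, List.nil_append]
    exact Relation.ReflTransGen.refl
  | succ k ih =>
    rw [List.replicate_succ, List.cons_append]
    have h1 : Reach (true :: (List.replicate k true ++ false :: r))
        (true :: (false :: (List.replicate k true ++ r))) := reach_cons true ih
    refine h1.tail ⟨[], List.replicate k true ++ r, rfl, rfl⟩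

lemma exists_split (w : List Bool) (hw : false ∈ w) :
    ∃ k r, w = List.replicate k true ++ false :: r := by
  induction w with
  | nil => simp at hw
  | cons a w ih =>
    cases a with
    | false => exact ⟨0, w, rfl⟩
    | true =>
      have : false ∈ w := by simpa using hw
      obtain ⟨k, r, e⟩ := ih this
      exact ⟨k + 1, r, by rw [List.replicate_succ, e]; rfl⟩

lemma gcnt_replicate_true (k n : ℕ) : gcnt (List.replicate k true) n = 0 := by
  simp [gcnt, List.take_replicate, List.count_replicate]

lemma dom_reach_aux (N : ℕ) : ∀ w z : List Bool, w.length ≤ N → Dom w z → Reach w z := by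
  induction N with
  | zero =>
    rintro w z hw ⟨h1, _, _⟩
    have : w = [] := List.length_eq_zero_iff.mp (by omega)
    subst this
    have : z = [] := List.length_eq_zero_iff.mp (by omega)
    subst this; exact Relation.ReflTransGen.refl
  | succ N ih =>
    rintro w z hw ⟨h1, h2, h3⟩
    match w, z with
    | [], [] => exact Relation.ReflTransGen.refl
    | [], c :: z => simp at h1
    | a :: w, [] => simp at h1
    | a :: w, c :: z =>
      match a, c with
      | false, true =>
        have := h3 1
        simp [gcnt] at this
      | true, true =>
        refine reach_cons true (ih w z (by simp at hw; omega)
          ⟨by simpa using h1, by simpa using h2, fun n => ?_⟩)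
        have := h3 (n + 1)
        rw [gcnt_cons, gcnt_cons] at this
        simpa using this
      | false, false =>
        refine reach_cons false (ih w z (by simp at hw; omega)
          ⟨by simpa using h1, by simpa using h2, fun n => ?_⟩)
        have := h3 (n + 1)
        rw [gcnt_cons, gcnt_cons] at this
        simpa using this
      | true, false =>
        have hcz : w.count false = z.count false + 1 := by
          simp [List.count_cons] at h2; omega
        have hmem : false ∈ w := List.count_pos_iff.mp (by omega)
        obtain ⟨k, r, e⟩ := exists_split w hmem
        subst e
        have efull : (true :: (List.replicate k true ++ false :: r))
            = List.replicate (k + 1) true ++ false :: r := by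
          rw [List.replicate_succ]; rfl
        have hlen : (List.replicate (k + 1) true ++ r).length = z.length := by
          simp at h1 ⊢; omega
        have hcnt : (List.replicate (k + 1) true ++ r).count false = z.count false := by
          simp [List.count_replicate] at hcz ⊢; omega
        have hdom : ∀ n, gcnt (List.replicate (k + 1) true ++ r) n ≤ gcnt z n := by
          intro n
          rcases le_or_gt n (k + 1) with hn | hn
          · have h0 : gcnt (List.replicate (k + 1) true ++ r) n = 0 := by
              rw [gcnt_prefix _ _ (by simpa using hn), gcnt_replicate_true]
            omega
          · obtain ⟨m, rfl⟩ : ∃ m, n = (k + 1) + (m + 1) := ⟨n - (k + 1) - 1, by omega⟩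
            have e1 : gcnt (List.replicate (k + 1) true ++ r) ((k + 1) + (m + 1))
                = gcnt r (m + 1) := by
              have := gcnt_split (List.replicate (k + 1) true) r (m + 1)
              simp [List.count_replicate] at this
              simpa using this
            have e2 := h3 ((k + 1) + (m + 1) + 1)
            rw [efull] at e2
            have e3 : gcnt (List.replicate (k + 1) true ++ false :: r) ((k + 1) + (m + 1) + 1)
                = 1 + gcnt r (m + 1) := by
              have hq := gcnt_split (List.replicate (k + 1) true) (false :: r) (m + 2)
              simp only [List.length_replicate] at hq
              rw [show (k + 1) + (m + 1) + 1 = (k + 1) + (m + 2) from by omega, hq, gcnt_cons]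
              simp [List.count_replicate]
            have e4 : gcnt (false :: z) ((k + 1) + (m + 1) + 1)
                = 1 + gcnt z ((k + 1) + (m + 1)) := by
              rw [gcnt_cons]; simp
            rw [e1]; omega
        have hreach2 : Reach (List.replicate (k + 1) true ++ r) z :=
          ih _ _ (by simp at hw ⊢; omega) ⟨hlen, hcnt, hdom⟩
        have h0 : Reach (true :: (List.replicate k true ++ false :: r))
            (false :: (List.replicate (k + 1) true ++ r)) := by
          rw [efull]; exact reach_pull (k + 1) r
        exact h0.trans (reach_cons false hreach2)

lemma reach_iff_dom (w z : List Bool) : Reach w z ↔ Dom w z :=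
  ⟨reach_dom, fun h => dom_reach_aux w.length w z le_rfl h⟩

/-! ### delOcc / dblOcc specifications -/

lemma delOcc_none : ∀ (i : ℕ) (x : List Bool), x.count false < i →
    delOcc false i x = none := by
  intro i x
  induction x generalizing i with
  | nil => intro _; rfl
  | cons a w ih =>
    intro h
    cases a with
    | false =>
      simp only [List.count_cons] at h
      have hi1 : i ≠ 1 := by simp at h; omega
      simp only [delOcc, if_pos rfl, if_neg hi1, ih (i - 1) (by simp at h; omega)]
      rfl
    | true =>
      simp only [List.count_cons] at h
      have : delOcc false i w = none := ih i (by simp at h; omega)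
      simp [delOcc, this]

lemma delOcc_some : ∀ (i : ℕ) (x : List Bool), 1 ≤ i → i ≤ x.count false →
    ∃ u v, x = u ++ false :: v ∧ u.count false = i - 1 ∧ delOcc false i x = some (u ++ v) := by
  intro i x
  induction x generalizing i with
  | nil => intro _ h2; simp at h2; omega
  | cons a w ih =>
    intro h1 h2
    cases a with
    | false =>
      by_cases hi1 : i = 1
      · subst hi1
        exact ⟨[], w, rfl, rfl, by simp [delOcc]⟩
      · have hcount : i - 1 ≤ w.count false := by simp [List.count_cons] at h2; omega
        obtain ⟨u, v, e1, e2, e3⟩ := ih (i - 1) (by omega) hcount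
        refine ⟨false :: u, v, by rw [e1]; rfl, by simp [List.count_cons]; omega, ?_⟩
        simp [delOcc, if_neg hi1, e3]
    | true =>
      have hcount : i ≤ w.count false := by simp [List.count_cons] at h2; omega
      obtain ⟨u, v, e1, e2, e3⟩ := ih i h1 hcount
      refine ⟨true :: u, v, by rw [e1]; rfl, by simpa using e2, ?_⟩
      simp [delOcc, e3]

lemma dblOcc_some : ∀ (i : ℕ) (y : List Bool), 1 ≤ i → i ≤ y.count false →
    ∃ s t, y = s ++ false :: t ∧ s.count false = i - 1 ∧
      dblOcc false i y = some (s ++ false :: false :: t) := by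
  intro i y
  induction y generalizing i with
  | nil => intro _ h2; simp at h2; omega
  | cons a w ih =>
    intro h1 h2
    cases a with
    | false =>
      by_cases hi1 : i = 1
      · subst hi1
        exact ⟨[], w, rfl, rfl, by simp [dblOcc]⟩
      · have hcount : i - 1 ≤ w.count false := by simp [List.count_cons] at h2; omega
        obtain ⟨s, t, e1, e2, e3⟩ := ih (i - 1) (by omega) hcount
        refine ⟨false :: s, t, by rw [e1]; rfl, by simp [List.count_cons]; omega, ?_⟩
        simp [dblOcc, if_neg hi1, e3]
    | true =>
      have hcount : i ≤ w.count false := by simp [List.count_cons] at h2; omega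
      obtain ⟨s, t, e1, e2, e3⟩ := ih i h1 hcount
      refine ⟨true :: s, t, by rw [e1]; rfl, by simpa using e2, ?_⟩
      simp [dblOcc, e3]

/-! ### the key domination equivalence -/

lemma dom_iff {u v s t : List Bool} {i : ℕ} (hi : 1 ≤ i)
    (hu : u.count false = i) (hs : s.count false = i - 1) :
    Dom (u ++ v) (s ++ false :: t) ↔ Dom (u ++ false :: v) (s ++ false :: false :: t) := by
  have hxA : ∀ m, gcnt (u ++ false :: v) (u.length + m) = i + gcnt (false :: v) m := by
    intro m; rw [gcnt_split, hu]
  have hx'A : ∀ m, gcnt (u ++ v) (u.length + m) = i + gcnt v m := by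
    intro m; rw [gcnt_split, hu]
  have hyB : ∀ m, gcnt (s ++ false :: t) (s.length + m) = (i - 1) + gcnt (false :: t) m := by
    intro m; rw [gcnt_split, hs]
  have hy'B : ∀ m, gcnt (s ++ false :: false :: t) (s.length + m)
      = (i - 1) + gcnt (false :: false :: t) m := by
    intro m; rw [gcnt_split, hs]
  have hfv : ∀ m, gcnt (false :: v) (m + 1) = 1 + gcnt v m := by
    intro m; rw [gcnt_cons]; simp
  have hft : ∀ m, gcnt (false :: t) (m + 1) = 1 + gcnt t m := by
    intro m; rw [gcnt_cons]; simp
  have hfft : ∀ m, gcnt (false :: false :: t) (m + 1) = 1 + gcnt (false :: t) m := by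
    intro m; rw [gcnt_cons]; simp
  have hus : ∀ n, n ≤ u.length → gcnt (u ++ v) n = gcnt (u ++ false :: v) n := by
    intro n hn; rw [gcnt_prefix _ _ hn, gcnt_prefix _ _ hn]
  have hss : ∀ n, n ≤ s.length → gcnt (s ++ false :: t) n = gcnt (s ++ false :: false :: t) n := by
    intro n hn; rw [gcnt_prefix _ _ hn, gcnt_prefix _ _ hn]
  have hsmall_s : ∀ n, n ≤ s.length → gcnt (s ++ false :: t) n ≤ i - 1 := by
    intro n hn; rw [gcnt_prefix _ _ hn]; exact hs ▸ gcnt_le_count s n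
  have hsmall_s' : ∀ n, n ≤ s.length → gcnt (s ++ false :: false :: t) n ≤ i - 1 := by
    intro n hn; rw [gcnt_prefix _ _ hn]; exact hs ▸ gcnt_le_count s n
  have hsmall_u : ∀ n, n ≤ u.length → gcnt (u ++ false :: v) n ≤ i := by
    intro n hn; rw [gcnt_prefix _ _ hn]; exact hu ▸ gcnt_le_count u n
  constructor
  · rintro ⟨h1, h2, h3⟩
    have hBA : s.length ≤ u.length := by
      by_contra hc
      push_neg at hc
      obtain ⟨j, hj⟩ := Nat.exists_eq_add_of_lt hc
      have e1 : gcnt (u ++ v) s.length = i + gcnt v (j + 1) := by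
        rw [hj, show u.length + j + 1 = u.length + (j + 1) from by omega, hx'A]
      have e2 : gcnt (s ++ false :: t) s.length ≤ i - 1 := hsmall_s _ le_rfl
      have := h3 s.length
      omega
    refine ⟨?_, ?_, ?_⟩
    · simp only [List.length_append, List.length_cons] at h1 ⊢; omega
    · simp only [List.count_append, List.count_cons] at h2 ⊢; simp at h2 ⊢; omega
    · intro n
      rcases le_or_gt n s.length with hn | hn
      · rw [← hus n (hn.trans hBA), ← hss n hn]
        exact h3 n
      · obtain ⟨m, rfl⟩ : ∃ m, n = s.length + (m + 1) := ⟨n - s.length - 1, by omega⟩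
        have ey' : gcnt (s ++ false :: false :: t) (s.length + (m + 1))
            = i + gcnt (false :: t) m := by
          rw [hy'B, hfft]; omega
        have ey : gcnt (s ++ false :: t) (s.length + m) = (i - 1) + gcnt (false :: t) m :=
          hyB m
        rw [ey']
        rcases le_or_gt (u.length) (s.length + m) with hm | hm
        · obtain ⟨j, hj⟩ := Nat.exists_eq_add_of_le hm
          have ex : gcnt (u ++ false :: v) (s.length + (m + 1)) = i + 1 + gcnt v j := by
            rw [show s.length + (m + 1) = u.length + (j + 1) from by omega, hxA, hfv]; omega
          have ex' : gcnt (u ++ v) (s.length + m) = i + gcnt v j := by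
            rw [hj, hx'A]
          have := h3 (s.length + m)
          omega
        · have ex : gcnt (u ++ false :: v) (s.length + (m + 1)) ≤ i :=
            hsmall_u _ (by omega)
          omega
  · rintro ⟨h1, h2, h3⟩
    have hBA : s.length ≤ u.length := by
      by_contra hc
      push_neg at hc
      have e1 : gcnt (u ++ false :: v) (u.length + 1) = i + 1 := by
        rw [hxA, hfv 0, gcnt_zero]
      have e2 : gcnt (s ++ false :: false :: t) (u.length + 1) ≤ i - 1 :=
        hsmall_s' _ (by omega)
      have := h3 (u.length + 1)
      omega
    refine ⟨?_, ?_, ?_⟩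
    · simp only [List.length_append, List.length_cons] at h1 ⊢; omega
    · simp only [List.count_append, List.count_cons] at h2 ⊢; simp at h2 ⊢; omega
    · intro n
      rcases le_or_gt n s.length with hn | hn
      · rw [hus n (hn.trans hBA), hss n hn]
        exact h3 n
      · rcases le_or_gt n u.length with hn2 | hn2
        · -- s.length < n ≤ u.length
          have e1 : gcnt (u ++ v) n ≤ i := by
            rw [gcnt_prefix _ _ hn2]; exact hu ▸ gcnt_le_count u n
          obtain ⟨m, rfl⟩ : ∃ m, n = s.length + (m + 1) := ⟨n - s.length - 1, by omega⟩
          have e2 : gcnt (s ++ false :: t) (s.length + (m + 1)) = i + gcnt t m := by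
            rw [hyB, hft]; omega
          omega
        · -- u.length < n
          obtain ⟨m, rfl⟩ : ∃ m, n = u.length + (m + 1) := ⟨n - u.length - 1, by omega⟩
          have ex' : gcnt (u ++ v) (u.length + (m + 1)) = i + gcnt v (m + 1) := hx'A _
          have ex : gcnt (u ++ false :: v) (u.length + (m + 2)) = i + 1 + gcnt v (m + 1) := by
            rw [hxA, hfv]; omega
          obtain ⟨j, hj⟩ := Nat.exists_eq_add_of_le hBA
          have ey' : gcnt (s ++ false :: false :: t) (u.length + (m + 2))
              = i + gcnt (false :: t) (j + m + 1) := by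
            rw [show u.length + (m + 2) = s.length + (j + m + 1 + 1) from by omega, hy'B, hfft]
            omega
          have ey : gcnt (s ++ false :: t) (u.length + (m + 1))
              = (i - 1) + gcnt (false :: t) (j + m + 1) := by
            rw [show u.length + (m + 1) = s.length + (j + m + 1) from by omega, hyB]
          have := h3 (u.length + (m + 2))
          omega

lemma pairing_congr {a b c d : List Bool} (h : Reach a b ↔ Reach c d) :
    pairing a b = pairing c d := by
  classical
  unfold pairing
  rw [if_congr h rfl rfl]

end PawnAdjointAux

/-- The `*`-adjoint of deleting the `(i+1)`-th anti-pawn is doubling the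
`i`-th anti-pawn: `⟨a_{q,i+1} x | y⟩ = ⟨x | a_{q,i}† y⟩`. -/
theorem del_dbl_antipawn_adjoint (i : ℕ) (hi : 1 ≤ i) (y : List Bool)
    (hy : i ≤ y.count false) (x : List Bool) :
    pairingO (delOcc false (i + 1) x) (some y) = pairingO (some x) (dblOcc false i y) := by
  obtain ⟨s, t, hy1, hs, hdbl⟩ := PawnAdjointAux.dblOcc_some i y hi hy
  rw [hdbl]
  by_cases hx : i + 1 ≤ x.count false
  · obtain ⟨u, v, hx1, hu, hdel⟩ := PawnAdjointAux.delOcc_some (i + 1) x (by omega) hx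
    rw [hdel]
    show pairing (u ++ v) y = pairing x (s ++ false :: false :: t)
    subst hx1; subst hy1
    exact PawnAdjointAux.pairing_congr (by
      rw [PawnAdjointAux.reach_iff_dom, PawnAdjointAux.reach_iff_dom]
      exact PawnAdjointAux.dom_iff hi (by omega) hs)
  · rw [PawnAdjointAux.delOcc_none _ _ (by omega)]
    show (0 : ZMod 2) = pairing x (s ++ false :: false :: t)
    have hnr : ¬ Reach x (s ++ false :: false :: t) := by
      intro h
      have := (PawnAdjointAux.reach_dom h).2.1
      have hc : (s ++ false :: false :: t).count false = y.count false + 1 := by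
        rw [hy1]; simp [List.count_append, List.count_cons]; omega
      omega
    unfold pairing
    rw [if_neg hnr]
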